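/- arXiv:1806.08519 — 3 statements merged into one kernel-verified Lean document; each statement's English description precedes it below -/
import Mathlib

section
/- The category Rec has parameterized list objects: for every object A ⊆ ℕ, the subset List(A) := {n ∈ ℕ : for all i < lh(n), (n)_i ∈ A}, together with the empty-list morphism {0} → List(A) sending 0 to the code of the empty list and the append morphism cons : List(A) × A → List(A) sending ⟨l,a⟩ to cnc(l,a), satisfies: for all objects P, B of Rec and all morphisms f : P → B and g : B × A → B of Rec there is a unique morphism h : P × List(A) → B of Rec with h(⟨p, empty⟩) = f(p) and h(⟨p, cnc(l,a)⟩) = g(⟨h(⟨p,l⟩), a⟩) for all p ∈ P, l ∈ List(A), a ∈ A. -/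
open CategoryTheory

namespace RecPaper

/-- Kleene application `{e}(n)`: apply the partial recursive function with Gödel code `e`
to the input `n`. -/
def kap (e n : ℕ) : Part ℕ :=
  Nat.Partrec.Code.eval (Denumerable.ofNat Nat.Partrec.Code e) n

/-- The type of objects of the category `Rec`: subsets of `ℕ`. -/
def RecCat : Type := Set ℕ

/-- The underlying subset of `ℕ` of an object of `Rec`. -/
def RecCat.carrier (A : RecCat) : Set ℕ := A

/-- View a subset of `ℕ` as an object of `Rec`. -/
def RecCat.ofSet (A : Set ℕ) : RecCat := A

instance : CoeSort RecCat Type := ⟨fun A => {n : ℕ // n ∈ A.carrier}⟩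

/-- A function between subsets of `ℕ` is *tracked* if there is a partial recursive
function, defined on the whole domain, whose restriction to the domain is the given
function. -/
def Tracked {A B : RecCat} (f : A → B) : Prop :=
  ∃ g : ℕ →. ℕ, Nat.Partrec g ∧ ∀ a : A, g a.val = Part.some (f a).val

/-- The category `Rec` of subsets of `ℕ` and restrictions of partial recursive functions. -/
instance : Category RecCat where
  Hom A B := {f : A → B // Tracked f}
  id A := ⟨fun a => a, (fun n => n : ℕ → ℕ), Nat.Partrec.of_primrec Nat.Primrec.id,
    fun _ => rfl⟩
  comp {A B C} f g := ⟨fun a => g.1 (f.1 a), by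
    obtain ⟨u, pu, hu⟩ := f.2
    obtain ⟨v, pv, hv⟩ := g.2
    refine ⟨fun n => u n >>= v, pv.comp pu, fun a => ?_⟩
    exact (congrArg (fun x => Part.bind x v) (hu a)).trans ((Part.bind_some _ _).trans (hv (f.1 a)))⟩
  id_comp _ := rfl
  comp_id _ := rfl
  assoc _ _ _ := rfl

/-- The underlying function of a morphism of `Rec`. -/
def hfun {A B : RecCat} (f : A ⟶ B) : A → B := f.1

/-- The value of a morphism of `Rec` on an element, as a natural number. -/
def happ {A B : RecCat} (f : A ⟶ B) (a : A) : ℕ := (hfun f a).val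


/-- The product set `{⟨a,b⟩ : a ∈ A, b ∈ B}`. -/
def prodSet (A B : Set ℕ) : Set ℕ := {n | ∃ a ∈ A, ∃ b ∈ B, n = Nat.pair a b}

/-- The length `lh(n)` of the finite list coded by `n`. -/
def lh (n : ℕ) : ℕ := (Denumerable.ofNat (List ℕ) n).length

/-- The `i`-th component `(n)_i` of the finite list coded by `n`. -/
def nthEl (n i : ℕ) : ℕ := (Denumerable.ofNat (List ℕ) n).getD i 0

/-- The code of the empty list. -/
def emptyCode : ℕ := Encodable.encode ([] : List ℕ)

/-- The concatenation function `cnc(l,a)` appending one element to the list coded by `l`. -/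
def cnc (l a : ℕ) : ℕ := Encodable.encode (Denumerable.ofNat (List ℕ) l ++ [a])

/-- The set `List(A)` of codes of finite lists of elements of `A`. -/
def listSet (A : Set ℕ) : Set ℕ := {n | ∀ i < lh n, nthEl n i ∈ A}


section Aux

open Denumerable Encodable

/-- Decode a natural number to a list. -/
abbrev decList (n : ℕ) : List ℕ := Denumerable.ofNat (List ℕ) n

lemma encode_decList (n : ℕ) : Encodable.encode (decList n) = n :=
  Denumerable.encode_ofNat n

lemma decList_encode (L : List ℕ) : decList (Encodable.encode L) = L :=
  Denumerable.ofNat_encode L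

lemma decList_emptyCode : decList emptyCode = [] := decList_encode []

lemma decList_cnc (l a : ℕ) : decList (cnc l a) = decList l ++ [a] := decList_encode _

lemma mem_listSet_iff {A : Set ℕ} {n : ℕ} :
    n ∈ listSet A ↔ ∀ a ∈ decList n, a ∈ A := by
  constructor
  · intro h a ha
    obtain ⟨i, hi, rfl⟩ := List.mem_iff_getElem.1 ha
    have := h i hi
    rwa [nthEl, List.getD_eq_getElem _ _ hi] at this
  · intro h i hi
    rw [nthEl, List.getD_eq_getElem _ _ hi]
    exact h _ (List.getElem_mem hi)

lemma prodSet_unpair {S T : Set ℕ} {n : ℕ} (h : n ∈ prodSet S T) :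
    n.unpair.1 ∈ S ∧ n.unpair.2 ∈ T := by
  obtain ⟨a, ha, b, hb, rfl⟩ := h
  simpa using ⟨ha, hb⟩

lemma emptyCode_mem (A : Set ℕ) : emptyCode ∈ listSet A :=
  mem_listSet_iff.2 (by rw [decList_emptyCode]; intro a ha; cases ha)

lemma cnc_mem_listSet {A : Set ℕ} {l a : ℕ} (hl : l ∈ listSet A) (ha : a ∈ A) :
    cnc l a ∈ listSet A := by
  refine mem_listSet_iff.2 ?_
  rw [decList_cnc]
  intro b hb
  rcases List.mem_append.1 hb with h | h
  · exact mem_listSet_iff.1 hl b h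
  · simp only [List.mem_singleton] at h; subst h; exact ha

lemma pmap_mk_congr {S : Set ℕ} {L M : List ℕ} (h : L = M)
    (hL : ∀ a ∈ L, a ∈ S) (hM : ∀ a ∈ M, a ∈ S) :
    L.pmap Subtype.mk hL = M.pmap Subtype.mk hM := by subst h; rfl

lemma hfun_congr {X Y : RecCat} (f : X ⟶ Y) {x y : X} (h : x.val = y.val) :
    hfun f x = hfun f y := by
  congr 1; exact Subtype.ext h

variable {A B P : RecCat}

/-- One application of the step morphism. -/
def consF (g : RecCat.ofSet (prodSet B.carrier A.carrier) ⟶ B) (b : B) (a : A) : B :=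
  hfun g ⟨Nat.pair b.val a.val, ⟨b.val, b.2, a.val, a.2, rfl⟩⟩

/-- Fold from the front of the reversed list. -/
def foldGo (g : RecCat.ofSet (prodSet B.carrier A.carrier) ⟶ B) (b : B) : List A → B
  | [] => b
  | a :: t => consF g (foldGo g b t) a

/-- Fold appending from the right. -/
def foldR (g : RecCat.ofSet (prodSet B.carrier A.carrier) ⟶ B) (b : B) (L : List A) : B :=
  foldGo g b L.reverse

lemma foldR_nil (g : RecCat.ofSet (prodSet B.carrier A.carrier) ⟶ B) (b : B) :
    foldR g b [] = b := rfl

lemma foldR_append (g : RecCat.ofSet (prodSet B.carrier A.carrier) ⟶ B) (b : B)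
    (L : List A) (a : A) : foldR g b (L ++ [a]) = consF g (foldR g b L) a := by
  show foldGo g b (L ++ [a]).reverse = _
  rw [List.reverse_append]
  rfl

lemma consF_eq (g : RecCat.ofSet (prodSet B.carrier A.carrier) ⟶ B) (b : B) (a : A)
    {z : RecCat.ofSet (prodSet B.carrier A.carrier)}
    (hz : z.val = Nat.pair b.val a.val) : consF g b a = hfun g z :=
  hfun_congr g hz.symm

/-- The underlying function of the unique fold morphism. -/
def hFun (f : P ⟶ B) (g : RecCat.ofSet (prodSet B.carrier A.carrier) ⟶ B)
    (x : RecCat.ofSet (prodSet P.carrier (listSet A.carrier))) : B :=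
  foldR g (hfun f ⟨x.val.unpair.1, (prodSet_unpair x.2).1⟩)
    ((decList x.val.unpair.2).pmap Subtype.mk
      (fun a ha => mem_listSet_iff.1 (prodSet_unpair x.2).2 a ha))

lemma hFun_eq (f : P ⟶ B) (g : RecCat.ofSet (prodSet B.carrier A.carrier) ⟶ B)
    (x : RecCat.ofSet (prodSet P.carrier (listSet A.carrier))) {p l : ℕ}
    (hx : x.val = Nat.pair p l) (hp : p ∈ P.carrier)
    (hl : ∀ a ∈ decList l, a ∈ A.carrier) :
    hFun f g x = foldR g (hfun f ⟨p, hp⟩) ((decList l).pmap Subtype.mk hl) := by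
  have h1 : x.val.unpair.1 = p := by rw [hx]; simp
  have h2 : decList x.val.unpair.2 = decList l := by rw [hx]; simp
  unfold hFun
  congr 1
  · exact hfun_congr f h1
  · exact pmap_mk_congr h2 _ _

lemma hFun_empty (f : P ⟶ B) (g : RecCat.ofSet (prodSet B.carrier A.carrier) ⟶ B)
    (x : RecCat.ofSet (prodSet P.carrier (listSet A.carrier))) (p : P)
    (hx : x.val = Nat.pair p.val emptyCode) : hFun f g x = hfun f p := by
  rw [hFun_eq f g x hx p.2 (by rw [decList_emptyCode]; intro a ha; cases ha)]
  rw [pmap_mk_congr decList_emptyCode _ (fun a ha => by cases ha)]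
  rfl

lemma hFun_cons (f : P ⟶ B) (g : RecCat.ofSet (prodSet B.carrier A.carrier) ⟶ B)
    (x y : RecCat.ofSet (prodSet P.carrier (listSet A.carrier))) (p l a : ℕ)
    (hx : x.val = Nat.pair p (cnc l a)) (hy : y.val = Nat.pair p l) (ha : a ∈ A.carrier) :
    hFun f g x = consF g (hFun f g y) ⟨a, ha⟩ := by
  have hp : p ∈ P.carrier := by
    have := (prodSet_unpair y.2).1; rw [hy] at this; simpa using this
  have hlista : cnc l a ∈ listSet A.carrier := by
    have := (prodSet_unpair x.2).2; rw [hx] at this; simpa using this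
  have hl : ∀ b ∈ decList l, b ∈ A.carrier := by
    intro b hb
    exact mem_listSet_iff.1 hlista b (by rw [decList_cnc]; exact List.mem_append_left _ hb)
  have hl' : ∀ b ∈ decList (cnc l a), b ∈ A.carrier := mem_listSet_iff.1 hlista
  rw [hFun_eq f g x hx hp hl', hFun_eq f g y hy hp hl]
  rw [pmap_mk_congr (decList_cnc l a) hl'
    (by intro b hb; exact hl' b (by rwa [decList_cnc]))]
  rw [List.pmap_append]
  simp only [List.pmap]
  rw [foldR_append]

lemma rec_fold (g : RecCat.ofSet (prodSet B.carrier A.carrier) ⟶ B) {v : ℕ →. ℕ}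
    (hv : ∀ z : RecCat.ofSet (prodSet B.carrier A.carrier),
      v z.val = Part.some (hfun g z).val)
    (b : B) (L : List ℕ) (hL : ∀ a ∈ L, a ∈ A.carrier) :
    ∀ (k : ℕ), k ≤ L.length →
    (Nat.rec (motive := fun _ => Part ℕ) (Part.some b.val)
      (fun y IH => IH.bind fun i => v (Nat.pair i (L.getD y 0))) k)
      = Part.some ((foldR g b ((L.take k).pmap Subtype.mk
          (fun a ha => hL a (List.take_subset _ _ ha)))).val) := by
  intro k
  induction k with
  | zero => intro _; rfl
  | succ k ih =>
    intro hk
    have hk' : k < L.length := hk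
    show ((Nat.rec (motive := fun _ => Part ℕ) (Part.some b.val)
      (fun y IH => IH.bind fun i => v (Nat.pair i (L.getD y 0))) k).bind
        fun i => v (Nat.pair i (L.getD k 0))) = _
    rw [ih (le_of_lt hk'), Part.bind_some, List.getD_eq_getElem _ _ hk']
    set b' : B := foldR g b ((L.take k).pmap Subtype.mk
      (fun a ha => hL a (List.take_subset _ _ ha))) with hb'
    have hz := hv ⟨Nat.pair b'.val (L[k]'hk'),
      ⟨b'.val, b'.2, L[k]'hk', hL _ (List.getElem_mem hk'), rfl⟩⟩
    rw [hz]
    rw [pmap_mk_congr (M := L.take k ++ [L[k]'hk']) (List.take_concat_get' L k hk').symm _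
      (by
        intro c hc
        rcases List.mem_append.1 hc with h | h
        · exact hL c (List.take_subset _ _ h)
        · simp only [List.mem_singleton] at h; subst h; exact hL _ (List.getElem_mem hk'))]
    rw [List.pmap_append]
    simp only [List.pmap]
    rw [foldR_append]
    rfl

lemma hFun_tracked (f : P ⟶ B) (g : RecCat.ofSet (prodSet B.carrier A.carrier) ⟶ B) :
    Tracked (hFun f g) := by
  obtain ⟨u, pu, hu⟩ := f.2
  obtain ⟨v, pv, hv⟩ := g.2
  refine ⟨fun n => Nat.rec (motive := fun _ => Part ℕ) (u n.unpair.1)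
    (fun y IH => IH.bind fun i => v (Nat.pair i (nthEl n.unpair.2 y))) (lh n.unpair.2),
    ?_, ?_⟩
  · apply Partrec.nat_iff.1
    have clh : Computable fun n : ℕ => lh n.unpair.2 :=
      ((Primrec.list_length.comp ((Primrec.ofNat (List ℕ)).comp
        (Primrec.snd.comp Primrec.unpair))).of_eq (fun n => rfl)).to_comp
    have cg : Partrec fun n : ℕ => u n.unpair.1 :=
      (Partrec.nat_iff.2 pu).comp
        ((Primrec.fst.comp Primrec.unpair).to_comp)
    have chin : Computable fun x : ℕ × (ℕ × ℕ) =>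
        Nat.pair x.2.2 (nthEl x.1.unpair.2 x.2.1) :=
      ((Primrec₂.natPair.comp (Primrec.snd.comp Primrec.snd)
        ((Primrec.list_getD 0).comp
          ((Primrec.ofNat (List ℕ)).comp (Primrec.snd.comp
            (Primrec.unpair.comp Primrec.fst)))
          (Primrec.fst.comp Primrec.snd))).of_eq (fun x => rfl)).to_comp
    have ch : Partrec₂ fun (n : ℕ) (q : ℕ × ℕ) =>
        v (Nat.pair q.2 (nthEl n.unpair.2 q.1)) :=
      (Partrec.nat_iff.2 pv).comp chin
    exact (Partrec.nat_rec clh cg ch).of_eq (fun n => rfl)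
  · intro x
    have hp : x.val.unpair.1 ∈ P.carrier := (prodSet_unpair x.2).1
    have hl : ∀ a ∈ decList x.val.unpair.2, a ∈ A.carrier :=
      mem_listSet_iff.1 (prodSet_unpair x.2).2
    have hu' : u x.val.unpair.1 = Part.some ((hfun f ⟨x.val.unpair.1, hp⟩).val) :=
      hu ⟨x.val.unpair.1, hp⟩
    show (Nat.rec (motive := fun _ => Part ℕ) (u x.val.unpair.1)
      (fun y IH => IH.bind fun i => v (Nat.pair i (nthEl x.val.unpair.2 y)))
      (lh x.val.unpair.2)) = _
    rw [hu']
    have := rec_fold g hv (hfun f ⟨x.val.unpair.1, hp⟩) (decList x.val.unpair.2) hl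
      (decList x.val.unpair.2).length (le_refl _)
    refine this.trans ?_
    congr 1
    show (foldR g _ _).val = (foldR g _ _).val
    rw [pmap_mk_congr List.take_length _ hl]

end Aux

/-- The category `Rec` has parameterized list objects: for every object `A`, `List(A)`
together with the empty-list morphism and the append morphism satisfies the universal
property of a parameterized list object. -/
theorem rec_parameterized_list_objects :
    ∀ A : RecCat,
      ∃ (emp : RecCat.ofSet {0} ⟶ RecCat.ofSet (listSet A.carrier))
        (cons : RecCat.ofSet (prodSet (listSet A.carrier) A.carrier) ⟶
          RecCat.ofSet (listSet A.carrier)),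
        (∀ x, happ emp x = emptyCode) ∧
        (∀ x, happ cons x = cnc (Nat.unpair x.val).1 (Nat.unpair x.val).2) ∧
        ∀ (P B : RecCat) (f : P ⟶ B)
          (g : RecCat.ofSet (prodSet B.carrier A.carrier) ⟶ B),
          ∃! h : RecCat.ofSet (prodSet P.carrier (listSet A.carrier)) ⟶ B,
            (∀ (x : RecCat.ofSet (prodSet P.carrier (listSet A.carrier))) (p : P),
              x.val = Nat.pair p.val emptyCode → happ h x = happ f p) ∧
            (∀ (x y : RecCat.ofSet (prodSet P.carrier (listSet A.carrier)))
               (z : RecCat.ofSet (prodSet B.carrier A.carrier)) (p l a : ℕ),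
              x.val = Nat.pair p (cnc l a) → y.val = Nat.pair p l →
              z.val = Nat.pair (happ h y) a → happ h x = happ g z) := by
  intro A
  refine ⟨⟨fun _ => ⟨emptyCode, emptyCode_mem _⟩,
      (fun _ => emptyCode : ℕ → ℕ), Nat.Partrec.of_primrec (Nat.Primrec.const emptyCode),
      fun _ => rfl⟩,
    ⟨fun x => ⟨cnc x.val.unpair.1 x.val.unpair.2,
        cnc_mem_listSet (prodSet_unpair x.2).1 (prodSet_unpair x.2).2⟩,
      (fun n => cnc n.unpair.1 n.unpair.2 : ℕ → ℕ), ?_, fun _ => rfl⟩,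
    fun _ => rfl, fun _ => rfl, ?_⟩
  · apply Partrec.nat_iff.1
    have : Primrec fun n : ℕ => cnc n.unpair.1 n.unpair.2 :=
      ((Primrec.encode.comp (Primrec.list_append.comp
        ((Primrec.ofNat (List ℕ)).comp Primrec.fst)
        (Primrec.list_cons.comp Primrec.snd (Primrec.const [])))).comp
          Primrec.unpair).of_eq (fun n => rfl)
    exact this.to_comp.partrec
  · intro P B f g
    refine ⟨⟨hFun f g, hFun_tracked f g⟩, ⟨?_, ?_⟩, ?_⟩
    · intro x p hx
      show (hFun f g x).val = (hfun f p).val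
      rw [hFun_empty f g x p hx]
    · intro x y z p l a hx hy hz
      have hlista : cnc l a ∈ listSet A.carrier := by
        have := (prodSet_unpair x.2).2; rw [hx] at this; simpa using this
      have ha : a ∈ A.carrier :=
        mem_listSet_iff.1 hlista a (by rw [decList_cnc]; simp)
      show (hFun f g x).val = (hfun g z).val
      rw [hFun_cons f g x y p l a hx hy ha, consF_eq g (hFun f g y) ⟨a, ha⟩ hz]
    · intro h' ⟨hc1, hc2⟩
      have key : ∀ (L : List ℕ)
          (x : RecCat.ofSet (prodSet P.carrier (listSet A.carrier))),
          decList x.val.unpair.2 = L → happ h' x = (hFun f g x).val := by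
        intro L
        induction L using List.reverseRecOn with
        | nil =>
          intro x hxL
          have hp : x.val.unpair.1 ∈ P.carrier := (prodSet_unpair x.2).1
          have h2 : x.val.unpair.2 = emptyCode := by
            have := congrArg Encodable.encode hxL
            rwa [encode_decList] at this
          have hx : x.val = Nat.pair x.val.unpair.1 emptyCode := by
            rw [← h2, Nat.pair_unpair]
          rw [hc1 x ⟨x.val.unpair.1, hp⟩ hx]
          exact (congrArg Subtype.val (hFun_empty f g x ⟨x.val.unpair.1, hp⟩ hx)).symm
        | append_singleton L a ihL =>
          intro x hxL
          have hp : x.val.unpair.1 ∈ P.carrier := (prodSet_unpair x.2).1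
          have hlist : x.val.unpair.2 ∈ listSet A.carrier := (prodSet_unpair x.2).2
          have h2 : x.val.unpair.2 = cnc (Encodable.encode L) a := by
            calc x.val.unpair.2 = Encodable.encode (decList x.val.unpair.2) :=
                  (encode_decList _).symm
              _ = Encodable.encode (L ++ [a]) := by rw [hxL]
              _ = cnc (Encodable.encode L) a := by
                  rw [cnc]
                  exact congrArg Encodable.encode
                    (congrArg (· ++ [a]) (decList_encode L).symm)
          have hx : x.val = Nat.pair x.val.unpair.1 (cnc (Encodable.encode L) a) := by
            rw [← h2, Nat.pair_unpair]
          have hLmem : ∀ b ∈ L, b ∈ A.carrier := fun b hb =>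
            mem_listSet_iff.1 hlist b (by rw [hxL]; exact List.mem_append_left _ hb)
          have ha : a ∈ A.carrier :=
            mem_listSet_iff.1 hlist a (by rw [hxL]; simp)
          have hLcode : Encodable.encode L ∈ listSet A.carrier :=
            mem_listSet_iff.2 (by rw [decList_encode]; exact hLmem)
          set y : RecCat.ofSet (prodSet P.carrier (listSet A.carrier)) :=
            ⟨Nat.pair x.val.unpair.1 (Encodable.encode L),
              ⟨x.val.unpair.1, hp, Encodable.encode L, hLcode, rfl⟩⟩ with hy
          have hyv : y.val = Nat.pair x.val.unpair.1 (Encodable.encode L) := rfl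
          have ihy : happ h' y = (hFun f g y).val :=
            ihL y (by rw [hyv, Nat.unpair_pair]; exact decList_encode L)
          have hby : happ h' y ∈ B.carrier := (h'.1 y).2
          set z : RecCat.ofSet (prodSet B.carrier A.carrier) :=
            ⟨Nat.pair (happ h' y) a, ⟨happ h' y, hby, a, ha, rfl⟩⟩ with hzdef
          have e1 : happ h' x = happ g z :=
            hc2 x y z x.val.unpair.1 (Encodable.encode L) a hx hyv rfl
          have hz2 : z.val = Nat.pair (hFun f g y).val a := by
            show Nat.pair (happ h' y) a = _
            rw [ihy]
          rw [e1, congrArg Subtype.val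
            (hFun_cons f g x y x.val.unpair.1 (Encodable.encode L) a hx hyv ha),
            consF_eq g (hFun f g y) ⟨a, ha⟩ hz2]
          rfl
      exact Subtype.ext (funext fun x => Subtype.ext (key (decList x.val.unpair.2) x rfl))


end RecPaper
end

section
/- The category Rec is weakly locally cartesian closed: for every object A ⊆ ℕ, the slice category Rec/A has finite products and weak exponentials, i.e. for all objects q : B → A and r : C → A of Rec/A there exist an object w : W → A of Rec/A and a morphism ev : w ×_A q → r in Rec/A such that every morphism f : d ×_A q → r in Rec/A (for any object d : D → A) factors, not necessarily uniquely, as ev ∘ (f' ×_A id_q) for some morphism f' : d → w in Rec/A. -/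
open CategoryTheory

namespace RecPaper

open CategoryTheory.Limits

namespace WLCC

lemma recHom_ext {X Y : RecCat} {f g : X ⟶ Y} (h : ∀ a, (f.1 a).val = (g.1 a).val) : f = g :=
  Subtype.ext (funext fun a => Subtype.ext (h a))

lemma recHom_congr {X Y : RecCat} {f g : X ⟶ Y} (h : f = g) (a : X) :
    (f.1 a).val = (g.1 a).val := by rw [h]

lemma overHom_ext {A : RecCat} {X Y : Over A} {f g : X ⟶ Y}
    (h : ∀ a, (f.left.1 a).val = (g.left.1 a).val) : f = g :=
  Over.OverMorphism.ext (recHom_ext h)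

lemma overHom_congr {A : RecCat} {X Y : Over A} {f g : X ⟶ Y} (h : f = g) (a : X.left) :
    (f.left.1 a).val = (g.left.1 a).val := by rw [h]

lemma comp_val {X Y Z : RecCat} (f : X ⟶ Y) (g : Y ⟶ Z) (a : X) :
    ((f ≫ g).1 a).val = (g.1 (f.1 a)).val := rfl

variable {A : RecCat}

/-- carrier of the binary product (pullback over `A`). -/
def pSet (X Y : Over A) : Set ℕ :=
  {n | ∃ (hx : n.unpair.1 ∈ X.left.carrier) (hy : n.unpair.2 ∈ Y.left.carrier),
    (X.hom.1 ⟨_, hx⟩).val = (Y.hom.1 ⟨_, hy⟩).val}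

def pObj (X Y : Over A) : RecCat := RecCat.ofSet (pSet X Y)

lemma pObj_mem {X Y : Over A} (p : pObj X Y) : p.val ∈ pSet X Y := p.2

def pfst (X Y : Over A) : pObj X Y ⟶ X.left :=
  ⟨fun p => ⟨p.val.unpair.1, (pObj_mem p).elim fun hx _ => hx⟩,
    fun n => Part.some n.unpair.1, Nat.Partrec.of_primrec Nat.Primrec.left, fun _ => rfl⟩

def psnd (X Y : Over A) : pObj X Y ⟶ Y.left :=
  ⟨fun p => ⟨p.val.unpair.2, (pObj_mem p).elim fun _ h => h.elim fun hy _ => hy⟩,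
    fun n => Part.some n.unpair.2, Nat.Partrec.of_primrec Nat.Primrec.right, fun _ => rfl⟩

lemma p_compat {X Y : Over A} (p : pObj X Y) :
    (X.hom.1 ((pfst X Y).1 p)).val = (Y.hom.1 ((psnd X Y).1 p)).val := by
  obtain ⟨hx, hy, h⟩ := pObj_mem p
  exact h

def pOver (X Y : Over A) : Over A := Over.mk (pfst X Y ≫ X.hom)

def pProj₁ (X Y : Over A) : pOver X Y ⟶ X := Over.homMk (pfst X Y) rfl

def pProj₂ (X Y : Over A) : pOver X Y ⟶ Y :=
  Over.homMk (psnd X Y) (recHom_ext fun p => (p_compat p).symm)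

/-- trackers can be paired -/
lemma partrec_pair_comb {t1 t2 : ℕ →. ℕ} (h1 : Nat.Partrec t1) (h2 : Nat.Partrec t2) :
    Nat.Partrec fun n => (t1 n).bind fun a => (t2 n).map fun b => Nat.pair a b := by
  refine Partrec.nat_iff.mp ?_
  exact (Partrec.nat_iff.mpr h1).bind
    (((Partrec.nat_iff.mpr h2).comp Computable.fst).map
      ((Primrec₂.natPair.comp (Primrec.snd.comp Primrec.fst) Primrec.snd).to_comp :
        Computable₂ fun (p : ℕ × ℕ) (b : ℕ) => Nat.pair p.2 b))

lemma val_congr {X Y : RecCat} (f : X ⟶ Y) {a b : X} (h : a.val = b.val) :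
    (f.1 a).val = (f.1 b).val := congrArg (fun t => (f.1 t).val) (Subtype.ext h)

lemma pfst_val {X Y : Over A} (p : pObj X Y) : ((pfst X Y).1 p).val = p.val.unpair.1 := rfl

lemma psnd_val {X Y : Over A} (p : pObj X Y) : ((pfst X Y).1 p).val = p.val.unpair.1 := rfl

lemma pair_mem (X Y : Over A) (s : BinaryFan X Y) (z : s.pt.left) :
    Nat.pair (s.fst.left.1 z).val (s.snd.left.1 z).val ∈ pSet X Y := by
  have h1 := recHom_congr (Over.w s.fst) z
  have h2 := recHom_congr (Over.w s.snd) z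
  rw [comp_val] at h1 h2
  refine ⟨by simp, by simp, ?_⟩
  calc (X.hom.1 _).val = (X.hom.1 (s.fst.left.1 z)).val := val_congr _ (by simp)
    _ = (s.pt.hom.1 z).val := h1
    _ = (Y.hom.1 (s.snd.left.1 z)).val := h2.symm
    _ = _ := (val_congr _ (by simp)).symm

/-- the pairing map into the product, at the level of `Rec`. -/
def pPair (X Y : Over A) (s : BinaryFan X Y) : s.pt.left ⟶ pObj X Y := by
  refine ⟨fun z => ⟨Nat.pair (s.fst.left.1 z).val (s.snd.left.1 z).val, pair_mem X Y s z⟩, ?_⟩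
  obtain ⟨g1, pg1, hg1⟩ := s.fst.left.2
  obtain ⟨g2, pg2, hg2⟩ := s.snd.left.2
  refine ⟨fun n => (g1 n).bind fun a => (g2 n).map fun b => Nat.pair a b,
    partrec_pair_comb pg1 pg2, fun a => ?_⟩
  simp [hg1 a, hg2 a]

lemma pPair_val (X Y : Over A) (s : BinaryFan X Y) (z : s.pt.left) :
    ((pPair X Y s).1 z).val = Nat.pair (s.fst.left.1 z).val (s.snd.left.1 z).val := rfl

/-- the pairing map into the product. -/
def pLift (X Y : Over A) (s : BinaryFan X Y) : s.pt ⟶ pOver X Y := by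
  refine Over.homMk (pPair X Y s) (recHom_ext fun z => ?_)
  show ((pOver X Y).hom.1 ((pPair X Y s).1 z)).val = _
  show ((pfst X Y ≫ X.hom).1 _).val = _
  rw [comp_val]
  have h1 := recHom_congr (Over.w s.fst) z
  rw [comp_val] at h1
  refine (val_congr X.hom ?_).trans h1
  rw [pfst_val, pPair_val]
  simp

lemma pLift_val (X Y : Over A) (s : BinaryFan X Y) (z : s.pt.left) :
    ((pLift X Y s).left.1 z).val = Nat.pair (s.fst.left.1 z).val (s.snd.left.1 z).val := rfl

def pIsLimit (X Y : Over A) : IsLimit (BinaryFan.mk (pProj₁ X Y) (pProj₂ X Y)) := by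
  refine BinaryFan.isLimitMk (pLift X Y) (fun s => ?_) (fun s => ?_) (fun s m h1 h2 => ?_)
  · refine overHom_ext fun z => ?_
    show ((pPair X Y s).1 z).val.unpair.1 = (s.fst.left.1 z).val
    rw [pPair_val]; simp
  · refine overHom_ext fun z => ?_
    show ((pPair X Y s).1 z).val.unpair.2 = (s.snd.left.1 z).val
    rw [pPair_val]; simp
  · refine overHom_ext fun z => ?_
    have e1 := overHom_congr h1 z
    have e2 := overHom_congr h2 z
    rw [pLift_val]
    have e1' : (m.left.1 z).val.unpair.1 = (s.fst.left.1 z).val := e1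
    have e2' : (m.left.1 z).val.unpair.2 = (s.snd.left.1 z).val := e2
    rw [← e1', ← e2', Nat.pair_unpair]

lemma hasFiniteProducts_over (A : RecCat) : HasFiniteProducts (Over A) := by
  haveI ht : HasTerminal (Over A) := Over.mkIdTerminal.hasTerminal
  haveI : ∀ X Y : Over A, HasLimit (pair X Y) :=
    fun X Y => HasLimit.mk ⟨_, pIsLimit X Y⟩
  haveI hb : HasBinaryProducts (Over A) :=
    ⟨fun F => hasLimit_of_iso (diagramIsoPair F).symm⟩
  exact hasFiniteProducts_of_has_binary_and_terminal

section Exp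

variable (q r : Over A)

/-- carrier of the weak exponential: pairs `(a, e)` with `a ∈ A` and `e` a code
tracking a map from the fibre of `q` over `a` to the fibre of `r` over `a`. -/
def wSet : Set ℕ :=
  {n | n.unpair.1 ∈ A.carrier ∧ ∀ b : q.left, (q.hom.1 b).val = n.unpair.1 →
    ∃ (m : ℕ) (hc : m ∈ r.left.carrier),
      m ∈ kap n.unpair.2 b.val ∧ (r.hom.1 ⟨m, hc⟩).val = n.unpair.1}

def wObj : RecCat := RecCat.ofSet (wSet q r)

def wHom : wObj q r ⟶ A :=
  ⟨fun n => ⟨n.val.unpair.1, n.2.1⟩, fun n => Part.some n.unpair.1,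
    Nat.Partrec.of_primrec Nat.Primrec.left, fun _ => rfl⟩

def wOver : Over A := Over.mk (wHom q r)

lemma evSpec (x : pObj (wOver q r) q) :
    ∃ (m : ℕ) (hc : m ∈ r.left.carrier),
      m ∈ kap x.val.unpair.1.unpair.2 x.val.unpair.2 ∧
      (r.hom.1 ⟨m, hc⟩).val = x.val.unpair.1.unpair.1 := by
  obtain ⟨hw, hb, he⟩ := pObj_mem x
  exact hw.2 ⟨x.val.unpair.2, hb⟩ he.symm

noncomputable def evFun (x : pObj (wOver q r) q) : r.left :=
  ⟨(evSpec q r x).choose, (evSpec q r x).choose_spec.choose⟩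

lemma evFun_mem_kap (x : pObj (wOver q r) q) :
    (evFun q r x).val ∈ kap x.val.unpair.1.unpair.2 x.val.unpair.2 :=
  (evSpec q r x).choose_spec.choose_spec.1

lemma evFun_hom (x : pObj (wOver q r) q) :
    (r.hom.1 (evFun q r x)).val = x.val.unpair.1.unpair.1 :=
  (evSpec q r x).choose_spec.choose_spec.2

lemma kapTracker : Nat.Partrec fun n => kap n.unpair.1.unpair.2 n.unpair.2 := by
  refine Partrec.nat_iff.mp ?_
  have u1 : Primrec fun n : ℕ => n.unpair.1 := Primrec.fst.comp Primrec.unpair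
  have u2 : Primrec fun n : ℕ => n.unpair.2 := Primrec.snd.comp Primrec.unpair
  exact Nat.Partrec.Code.eval_part.comp
    ((Computable.ofNat _).comp (u2.comp u1).to_comp) u2.to_comp

noncomputable def evRec : pObj (wOver q r) q ⟶ r.left :=
  ⟨evFun q r, fun n => kap n.unpair.1.unpair.2 n.unpair.2, kapTracker, fun x =>
    Part.eq_some_iff.mpr (evFun_mem_kap q r x)⟩

noncomputable def ev : pOver (wOver q r) q ⟶ r := by
  refine Over.homMk (evRec q r) (recHom_ext fun x => ?_)
  show (r.hom.1 ((evRec q r).1 x)).val = _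
  exact (evFun_hom q r x).trans rfl

variable (d : Over A) (cG : Nat.Partrec.Code)
  (hmem : ∀ x : d.left, Nat.pair (d.hom.1 x).val
    (Encodable.encode (Nat.Partrec.Code.curry cG x.val)) ∈ wSet q r)

/-- transpose of a map `d ×_A q ⟶ r`, at the level of `Rec`. -/
noncomputable def fRec : d.left ⟶ wObj q r :=
  ⟨fun x => ⟨Nat.pair (d.hom.1 x).val
    (Encodable.encode (Nat.Partrec.Code.curry cG x.val)), hmem x⟩, by
    obtain ⟨gd, pgd, hgd⟩ := d.hom.2
    refine ⟨fun n => (gd n).map fun a =>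
      Nat.pair a (Encodable.encode (Nat.Partrec.Code.curry cG n)), ?_, fun x => by
        simp [hgd x]⟩
    refine Partrec.nat_iff.mp ?_
    exact (Partrec.nat_iff.mpr pgd).map
      ((Primrec₂.natPair.comp Primrec.snd
        ((Primrec.encode.comp (Nat.Partrec.Code.primrec₂_curry.comp
          (Primrec.const cG) Primrec.id)).comp Primrec.fst)).to_comp :
        Computable₂ fun (n a : ℕ) => Nat.pair a
          (Encodable.encode (Nat.Partrec.Code.curry cG n)))⟩

/-- transpose of a map `d ×_A q ⟶ r`, as a morphism of `Rec/A`. -/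
noncomputable def fOver : d ⟶ wOver q r := by
  refine Over.homMk (fRec q r d cG hmem) (recHom_ext fun x => ?_)
  show ((wOver q r).hom.1 ((fRec q r d cG hmem).1 x)).val = _
  show (Nat.pair (d.hom.1 x).val _).unpair.1 = (d.hom.1 x).val
  simp

lemma factor_key (ft : pOver d q ⟶ r)
    (hkey : ∀ z : pObj d q,
      kap (Encodable.encode (Nat.Partrec.Code.curry cG z.val.unpair.1)) z.val.unpair.2
        = Part.some ((ft.left.1 z).val))
    (ut : pOver d q ⟶ pOver (wOver q r) q)
    (h1 : ut ≫ pProj₁ (wOver q r) q = pProj₁ d q ≫ fOver q r d cG hmem)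
    (h2 : ut ≫ pProj₂ (wOver q r) q = pProj₂ d q) :
    ut ≫ ev q r = ft := by
  refine overHom_ext fun z => ?_
  have e1 := overHom_congr h1 z
  have e2 := overHom_congr h2 z
  show (evFun q r (ut.left.1 z)).val = (ft.left.1 z).val
  have e1' : (ut.left.1 z).val.unpair.1
      = Nat.pair (d.hom.1 ((pfst d q).1 z)).val
          (Encodable.encode (Nat.Partrec.Code.curry cG ((pfst d q).1 z).val)) := e1
  have e2' : (ut.left.1 z).val.unpair.2 = z.val.unpair.2 := e2
  have hm := evFun_mem_kap q r (ut.left.1 z)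
  rw [e1', Nat.unpair_pair, e2'] at hm
  have hm' : (evFun q r (ut.left.1 z)).val ∈
      kap (Encodable.encode (Nat.Partrec.Code.curry cG z.val.unpair.1)) z.val.unpair.2 := hm
  rw [hkey z] at hm'
  replace hm := hm'
  exact Part.mem_some_iff.mp hm

end Exp

end WLCC

open CategoryTheory.Limits in
/-- The category `Rec` is weakly locally cartesian closed: every slice `Rec/A` has finite
products, and for all objects `q`, `r` of `Rec/A` there are an object `w` and a morphism
`ev : w ×_A q ⟶ r` through which every morphism `d ×_A q ⟶ r` factors (not necessarily
uniquely) as `ev ∘ (f' ×_A id)`. -/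
theorem rec_weakly_locally_cartesian_closed :
    ∀ A : RecCat,
      HasFiniteProducts (Over A) ∧
      ∀ q r : Over A,
        ∃ (w wq : Over A) (π₁ : wq ⟶ w) (π₂ : wq ⟶ q),
          Nonempty (IsLimit (BinaryFan.mk π₁ π₂)) ∧
          ∃ ev : wq ⟶ r,
            ∀ (d dq : Over A) (ρ₁ : dq ⟶ d) (ρ₂ : dq ⟶ q),
              Nonempty (IsLimit (BinaryFan.mk ρ₁ ρ₂)) →
              ∀ f : dq ⟶ r,
                ∃ (f' : d ⟶ w) (u : dq ⟶ wq),
                  u ≫ π₁ = ρ₁ ≫ f' ∧ u ≫ π₂ = ρ₂ ∧ u ≫ ev = f := by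
  intro A
  refine ⟨WLCC.hasFiniteProducts_over A, fun q r => ?_⟩
  refine ⟨WLCC.wOver q r, WLCC.pOver (WLCC.wOver q r) q, WLCC.pProj₁ _ _, WLCC.pProj₂ _ _,
    ⟨WLCC.pIsLimit _ _⟩, WLCC.ev q r, ?_⟩
  rintro d dq ρ₁ ρ₂ ⟨hdq⟩ f
  have hPd := WLCC.pIsLimit d q
  set i : dq ⟶ WLCC.pOver d q := hPd.lift (BinaryFan.mk ρ₁ ρ₂) with hi
  set j : WLCC.pOver d q ⟶ dq :=
    hdq.lift (BinaryFan.mk (WLCC.pProj₁ d q) (WLCC.pProj₂ d q)) with hj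
  have hi1 : i ≫ WLCC.pProj₁ d q = ρ₁ := by
    simpa using hPd.fac (BinaryFan.mk ρ₁ ρ₂) ⟨WalkingPair.left⟩
  have hi2 : i ≫ WLCC.pProj₂ d q = ρ₂ := by
    simpa using hPd.fac (BinaryFan.mk ρ₁ ρ₂) ⟨WalkingPair.right⟩
  have hj1 : j ≫ ρ₁ = WLCC.pProj₁ d q := by
    simpa using hdq.fac (BinaryFan.mk (WLCC.pProj₁ d q) (WLCC.pProj₂ d q)) ⟨WalkingPair.left⟩
  have hj2 : j ≫ ρ₂ = WLCC.pProj₂ d q := by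
    simpa using hdq.fac (BinaryFan.mk (WLCC.pProj₁ d q) (WLCC.pProj₂ d q)) ⟨WalkingPair.right⟩
  have hij : i ≫ j = 𝟙 dq := by
    refine BinaryFan.IsLimit.hom_ext hdq ?_ ?_ <;>
      simp [Category.assoc, hj1, hj2, hi1, hi2]
  -- transpose data
  set ft : WLCC.pOver d q ⟶ r := j ≫ f with hft
  obtain ⟨G, pG, hG⟩ := ft.left.2
  obtain ⟨cG, hcG⟩ := Nat.Partrec.Code.exists_code.mp pG
  have key : ∀ z : WLCC.pObj d q,
      kap (Encodable.encode (Nat.Partrec.Code.curry cG z.val.unpair.1)) z.val.unpair.2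
        = Part.some ((ft.left.1 z).val) := by
    intro z
    have h1 : kap (Encodable.encode (Nat.Partrec.Code.curry cG z.val.unpair.1))
        z.val.unpair.2 = G z.val := by
      show Nat.Partrec.Code.eval (Denumerable.ofNat _ _) _ = _
      rw [Denumerable.ofNat_encode, Nat.Partrec.Code.eval_curry, Nat.pair_unpair, hcG]
    rw [h1, hG z]
  have hmem : ∀ x : d.left, Nat.pair (d.hom.1 x).val
      (Encodable.encode (Nat.Partrec.Code.curry cG x.val)) ∈ WLCC.wSet q r := by
    intro x
    constructor
    · simp
    · intro b hb
      rw [Nat.unpair_pair] at hb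
      have hz : Nat.pair x.val b.val ∈ WLCC.pSet d q := by
        refine ⟨by simp, by simp, ?_⟩
        calc (d.hom.1 _).val = (d.hom.1 x).val := WLCC.val_congr _ (by simp)
          _ = (q.hom.1 b).val := hb.symm
          _ = _ := (WLCC.val_congr _ (by simp)).symm
      set z : WLCC.pObj d q := ⟨Nat.pair x.val b.val, hz⟩ with hzdef
      have hk := key z
      simp only [hzdef, Nat.unpair_pair] at hk
      refine ⟨(ft.left.1 z).val, (ft.left.1 z).2, ?_, ?_⟩
      · rw [Nat.unpair_pair, hk]
        exact Part.mem_some _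
      · rw [Nat.unpair_pair]
        have hw := WLCC.recHom_congr (Over.w ft) z
        change (r.hom.1 (ft.left.1 z)).val = ((WLCC.pOver d q).hom.1 z).val at hw
        refine hw.trans ?_
        show ((WLCC.pfst d q ≫ d.hom).1 z).val = (d.hom.1 x).val
        rw [WLCC.comp_val]
        exact WLCC.val_congr _ (by simp [WLCC.pfst_val, hzdef])
  set f' : d ⟶ WLCC.wOver q r := WLCC.fOver q r d cG hmem with hf'
  have hwq := WLCC.pIsLimit (WLCC.wOver q r) q
  set ut : WLCC.pOver d q ⟶ WLCC.pOver (WLCC.wOver q r) q :=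
    hwq.lift (BinaryFan.mk (WLCC.pProj₁ d q ≫ f') (WLCC.pProj₂ d q)) with hut
  have hut1 : ut ≫ WLCC.pProj₁ (WLCC.wOver q r) q = WLCC.pProj₁ d q ≫ f' := by
    simpa using hwq.fac (BinaryFan.mk (WLCC.pProj₁ d q ≫ f') (WLCC.pProj₂ d q))
      ⟨WalkingPair.left⟩
  have hut2 : ut ≫ WLCC.pProj₂ (WLCC.wOver q r) q = WLCC.pProj₂ d q := by
    simpa using hwq.fac (BinaryFan.mk (WLCC.pProj₁ d q ≫ f') (WLCC.pProj₂ d q))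
      ⟨WalkingPair.right⟩
  have hkey2 : ut ≫ WLCC.ev q r = ft := WLCC.factor_key q r d cG hmem ft key ut hut1 hut2
  refine ⟨f', i ≫ ut, ?_, ?_, ?_⟩
  · rw [Category.assoc, hut1, ← Category.assoc, hi1]
  · rw [Category.assoc, hut2, hi2]
  · rw [Category.assoc, hkey2, hft, ← Category.assoc, hij, Category.id_comp]

end RecPaper
end

section
/- The Formal Church's Thesis is realized in the Kleene realizability doctrine: let R : ℕ → 𝒫(ℕ) be any function (a realized relation indexed by pair codes ⟨x,z⟩). If there exists e ∈ ℕ such that for every x ∈ ℕ, {e}(x) is defined and p₂({e}(x)) ∈ R(⟨x, p₁({e}(x))⟩), then there exist e' ∈ ℕ and c ∈ ℕ such that: for every x ∈ ℕ, {e'}(x) is defined, {c}(x) is defined, and {c}(x) ∈ R(⟨x, {e'}(x)⟩) (i.e. the choice function z = {e'}(x) is itself given by a Gödel code, uniformly realizing ∃e∀x∃y(T(e,x,y) ∧ R(x,U(y)))). -/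
namespace RecPaper

lemma kap_partrec (e : ℕ) : Nat.Partrec (kap e) :=
  Nat.Partrec.Code.exists_code.2 ⟨_, rfl⟩

lemma exists_code_map (e : ℕ) (g : ℕ → ℕ) (hg : Computable g) :
    ∃ c : ℕ, ∀ n, kap c n = (kap e n).map g := by
  have h : Nat.Partrec (fun n => (kap e n).map g) := by
    have := (Partrec.nat_iff.2 (kap_partrec e)).map (hg.comp Computable.snd).to₂
    exact Partrec.nat_iff.1 this
  obtain ⟨c, hc⟩ := Nat.Partrec.Code.exists_code.1 h
  exact ⟨Encodable.encode c, fun n => by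
    simp [kap, Denumerable.ofNat_encode, hc]⟩

/-- The Formal Church's Thesis is realized in the Kleene realizability doctrine: if a
code uniformly picks, for every `x`, a value `z` together with a realizer of `R(⟨x,z⟩)`,
then there is a Gödel code `e'` computing such a choice function `z = {e'}(x)`, together
with a code uniformly realizing `R(⟨x, {e'}(x)⟩)`. -/
theorem formal_church_thesis_realized :
    ∀ R : ℕ → Set ℕ,
      (∃ e : ℕ, ∀ x : ℕ, ∃ v : ℕ, kap e x = Part.some v ∧
        (Nat.unpair v).2 ∈ R (Nat.pair x (Nat.unpair v).1)) →
      ∃ e' c : ℕ, ∀ x : ℕ, ∃ w : ℕ,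
        kap e' x = Part.some w ∧
        ∃ u : ℕ, kap c x = Part.some u ∧ u ∈ R (Nat.pair x w) := by
  intro R ⟨e, he⟩
  obtain ⟨e', he'⟩ := exists_code_map e (fun v => (Nat.unpair v).1)
    (Computable.fst.comp Computable.unpair)
  obtain ⟨c, hc⟩ := exists_code_map e (fun v => (Nat.unpair v).2)
    (Computable.snd.comp Computable.unpair)
  refine ⟨e', c, fun x => ?_⟩
  obtain ⟨v, hv, hvR⟩ := he x
  exact ⟨(Nat.unpair v).1, by simp [he', hv], (Nat.unpair v).2, by simp [hc, hv], hvR⟩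

end RecPaper
end
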